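/- The linear map S: (x, y, z) ↦ ((z−x)/2)(X·X) − y·X + (z+x)/2 from L = k ⊕ E ⊕ k (with the Lorentz product ⟨(x,y,z),(x*,y*,z*)⟩ = y·y* + xx* − zz*) to the cycle space F (with the cycle pairing) is an isometry of bilinear spaces: it is a linear isomorphism satisfying ⟨S(u), S(v)⟩_F = ⟨u, v⟩_L for all u, v ∈ L. -/

import Mathlib

/-- The map `S : (x,y,z) ↦ ((z−x)/2)(X·X) − y·X + (z+x)/2` is a linear isomorphism from
`L = k ⊕ E ⊕ k` with the Lorentz product onto the cycle space `F` with the cycle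
pairing, and it is an isometry of bilinear spaces. -/
theorem stmt_17 {k : Type*} [Field k] (hchar : (2 : k) ≠ 0)
    {E : Type*} [AddCommGroup E] [Module k E]
    (B : LinearMap.BilinForm k E) (hB : B.IsSymm)
    (haniso : ∀ x : E, B x x = 0 → x = 0)
    (cyc lor : (k × E × k) → (k × E × k) → k)
    (hcyc : ∀ p q : k × E × k,
      cyc p q = B p.2.1 q.2.1 - 2 * p.1 * q.2.2 - 2 * q.1 * p.2.2)
    (hlor : ∀ u v : k × E × k,
      lor u v = B u.2.1 v.2.1 + u.1 * v.1 - u.2.2 * v.2.2) :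
    ∃ S : (k × E × k) ≃ₗ[k] (k × E × k),
      (∀ u : k × E × k, S u = ((u.2.2 - u.1) / 2, -u.2.1, (u.2.2 + u.1) / 2)) ∧
      (∀ u v : k × E × k, cyc (S u) (S v) = lor u v) := by
  refine ⟨{ toFun := fun u => ((u.2.2 - u.1) / 2, -u.2.1, (u.2.2 + u.1) / 2)
            invFun := fun v => (v.2.2 - v.1, -v.2.1, v.2.2 + v.1)
            map_add' := by intro a b; simp [Prod.ext_iff]; exact ⟨by ring, by abel, by ring⟩
            map_smul' := by
              intro c a; simp [Prod.ext_iff, smul_sub, smul_add, smul_div_assoc]; constructor <;> ring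
            left_inv := by intro a; simp [Prod.ext_iff]; constructor <;> field_simp <;> ring
            right_inv := by intro a; simp [Prod.ext_iff]; constructor <;> field_simp <;> ring },
          fun u => rfl, ?_⟩
  intro u v
  rw [hcyc, hlor]
  simp only [LinearEquiv.coe_mk, LinearMap.coe_mk, AddHom.coe_mk]
  have h : B (-u.2.1) (-v.2.1) = B u.2.1 v.2.1 := by simp
  rw [h]
  field_simp
  ring
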